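/- arXiv:1905.02999 — 2 statements merged into one kernel-verified Lean document; each statement's English description precedes it below -/
import Mathlib

section
/- Let A ∈ M_{M×N}(ℓ²(G)) and B ∈ M_{N×M}(ℓ²(G)) with transfer matrices Â and B̂ having all entries in L^∞(Ĝ). Let a*_m denote the m-th column of the involuted matrix A*, and b_m the m-th column of B. Then the sequences {T_g a*_m : g ∈ G, m = 1,…,M} and {T_g b_m : g ∈ G, m = 1,…,M} form a pair of dual frames for ℓ²_N(G) if and only if B̂(ξ) Â(ξ) = I_N for a.e. ξ ∈ Ĝ. -/
open scoped ComplexConjugate ENNReal Matrix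
open MeasureTheory

noncomputable section

namespace GroupSampling

/-- `ℓ²(G)` with values in `ℂ`. -/
abbrev ell2 (G : Type*) := lp (fun _ : G => ℂ) 2

/-- the product Hilbert space `ℓ²_N(G) = ℓ²(G) × ⋯ × ℓ²(G)` (`N` times). -/
abbrev ell2N (G : Type*) (N : ℕ) := PiLp 2 (fun _ : Fin N => ell2 G)

/-- `ℓ²_N(G)` is complete (its uniformity is definitionally the product uniformity). -/
instance ell2N.completeSpace {G : Type*} {N : ℕ} : CompleteSpace (ell2N G N) :=
  inferInstance

/-- the dual group `Ĝ` of the (countable discrete abelian) group `G`. -/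
abbrev GDual (G : Type*) [AddCommGroup G] [TopologicalSpace G] : Type _ :=
  PontryaginDual (Multiplicative G)

variable {G : Type*} [AddCommGroup G] [Countable G] [TopologicalSpace G] [DiscreteTopology G]

/-- the pairing `⟨g, ξ⟩ ∈ 𝕋 ⊆ ℂ` between a group element and a character. -/
def pairing (g : G) (ξ : GDual G) : ℂ := (ξ (Multiplicative.ofAdd g) : ℂ)

/-- translation `(T_g x)(h) = x(h - g)` on `ℓ²(G)`. -/
def shift (g : G) (x : ell2 G) : ell2 G :=
  ⟨fun h => x (h - g), by
    have hx : Summable fun h => ‖(x : ∀ _ : G, ℂ) h‖ ^ (2 : ℝ≥0∞).toReal :=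
      (memℓp_gen_iff (by norm_num)).mp (lp.memℓp x)
    exact memℓp_gen (((Equiv.subRight g).summable_iff
      (f := fun h => ‖(x : ∀ _ : G, ℂ) h‖ ^ (2 : ℝ≥0∞).toReal)).mpr hx)⟩

/-- componentwise translation on `ℓ²_N(G)`. -/
def shiftN {N : ℕ} (g : G) (x : ell2N G N) : ell2N G N := WithLp.toLp 2 (fun n => shift g (x n))

/-- the involution `x*(g) = conj (x(-g))` on `ℓ²(G)`. -/
def invol (x : ell2 G) : ell2 G :=
  ⟨fun g => conj ((x : ∀ _ : G, ℂ) (-g)), by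
    have hx : Summable fun h => ‖(x : ∀ _ : G, ℂ) h‖ ^ (2 : ℝ≥0∞).toReal :=
      (memℓp_gen_iff (by norm_num)).mp (lp.memℓp x)
    refine memℓp_gen ?_
    have := ((Equiv.neg G).summable_iff
      (f := fun h => ‖(x : ∀ _ : G, ℂ) h‖ ^ (2 : ℝ≥0∞).toReal)).mpr hx
    simpa [Function.comp_def] using this⟩

/-- entry `m` of the matrix convolution `A ∗ x` of `A ∈ M_{M×N}(ℓ²(G))` with `x ∈ ℓ²_N(G)`:
`(A ∗ x)_m(g) = Σ_{n=1}^N Σ_{g' ∈ G} a_{m,n}(g - g')·x_n(g')`. -/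
def convEntry {N M : ℕ} (A : Fin M → Fin N → ell2 G) (x : ell2N G N) (m : Fin M) (g : G) : ℂ :=
  ∑ n, ∑' g' : G, (A m n : ∀ _ : G, ℂ) (g - g') * (x n : ∀ _ : G, ℂ) g'

/-- spectral norm (largest singular value, i.e. Euclidean operator norm) of a complex matrix. -/
def specNorm {M N : ℕ} (B : Matrix (Fin M) (Fin N) ℂ) : ℝ :=
  ‖LinearMap.toContinuousLinearMap (Matrix.toEuclideanLin B)‖

/-- smallest eigenvalue `λ_min` of the positive semidefinite hermitian matrix `Bᴴ * B`. -/
def lamMin {M N : ℕ} (B : Matrix (Fin M) (Fin N) ℂ) : ℝ :=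
  ⨅ i, (Matrix.isHermitian_conjTranspose_mul_self B).eigenvalues i

/-- largest eigenvalue `λ_max` of the positive semidefinite hermitian matrix `Bᴴ * B`. -/
def lamMax {M N : ℕ} (B : Matrix (Fin M) (Fin N) ℂ) : ℝ :=
  ⨆ i, (Matrix.isHermitian_conjTranspose_mul_self B).eigenvalues i

/-- `v` is a Bessel sequence in `ℓ²_N(G)` with Bessel bound `β`. -/
def IsBesselFamily {N : ℕ} {ι : Type*} (v : ι → ell2N G N) (β : ℝ) : Prop :=
  ∀ f : ell2N G N,
    Summable (fun i => ‖(inner ℂ f (v i) : ℂ)‖ ^ 2) ∧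
    ∑' i, ‖(inner ℂ f (v i) : ℂ)‖ ^ 2 ≤ β * ‖f‖ ^ 2

/-- `v` is a frame for `ℓ²_N(G)` with frame bounds `α`, `β`. -/
def IsFrameFamily {N : ℕ} {ι : Type*} (v : ι → ell2N G N) (α β : ℝ) : Prop :=
  ∀ f : ell2N G N,
    Summable (fun i => ‖(inner ℂ f (v i) : ℂ)‖ ^ 2) ∧
    α * ‖f‖ ^ 2 ≤ ∑' i, ‖(inner ℂ f (v i) : ℂ)‖ ^ 2 ∧
    ∑' i, ‖(inner ℂ f (v i) : ℂ)‖ ^ 2 ≤ β * ‖f‖ ^ 2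

variable [MeasurableSpace (GDual G)] [BorelSpace (GDual G)] [CompactSpace (GDual G)]

/-- `F` is the Plancherel (Fourier) unitary isomorphism `ℓ²(G) ≃ L²(Ĝ)`: a linear isometric
bijection which on `ℓ¹ ∩ ℓ²` is given by the character sum `x̂(ξ) = Σ_{g∈G} x(g)·⟨-g,ξ⟩`. -/
def IsFourier (μ : Measure (GDual G)) (F : ell2 G ≃ₗᵢ[ℂ] Lp ℂ 2 μ) : Prop :=
  ∀ x : ell2 G, (Summable fun g => ‖(x : ∀ _ : G, ℂ) g‖) →
    (F x : GDual G → ℂ) =ᵐ[μ] fun ξ => ∑' g : G, (x : ∀ _ : G, ℂ) g * pairing (-g) ξ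

set_option linter.unusedSectionVars false
set_option linter.deprecated false
set_option maxHeartbeats 1600000

section Aux1
variable {μ : Measure (GDual G)}




lemma pairing_norm (g : G) (ξ : GDual G) : ‖pairing g ξ‖ = 1 := by
  simp [pairing, Circle.norm_coe]

lemma pairing_add (g h : G) (ξ : GDual G) :
    pairing (g + h) ξ = pairing g ξ * pairing h ξ := by
  simp [pairing, ofAdd_add]

lemma pairing_zero (ξ : GDual G) : pairing (0 : G) ξ = 1 := by
  simp [pairing]

lemma pairing_neg (g : G) (ξ : GDual G) : pairing (-g) ξ = conj (pairing g ξ) := by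
  simp [pairing, ofAdd_neg, ← Circle.coe_inv_eq_conj]

lemma pairing_continuous (g : G) : Continuous fun ξ : GDual G => pairing g ξ := by
  have h1 : Continuous (ContinuousMonoidHom.toContinuousMap :
      PontryaginDual (Multiplicative G) → C(Multiplicative G, Circle)) :=
    (ContinuousMonoidHom.isInducing_toContinuousMap _ _).continuous
  have h2 : Continuous fun f : C(Multiplicative G, Circle) => f (Multiplicative.ofAdd g) :=
    continuous_eval_const _
  exact continuous_subtype_val.comp (h2.comp h1)

/-- coercion lemma for `shift`. -/
lemma shift_apply (g : G) (x : ell2 G) (h : G) :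
    (shift g x : ∀ _ : G, ℂ) h = x (h - g) := rfl

lemma invol_apply (x : ell2 G) (g : G) :
    (invol x : ∀ _ : G, ℂ) g = conj ((x : ∀ _ : G, ℂ) (-g)) := rfl

lemma shift_add (g : G) (x y : ell2 G) : shift g (x + y) = shift g x + shift g y := by
  ext h
  simp [shift_apply, lp.coeFn_add]

lemma shift_smul (g : G) (c : ℂ) (x : ell2 G) : shift g (c • x) = c • shift g x := by
  ext h
  simp [shift_apply, lp.coeFn_smul]

lemma norm_shift (g : G) (x : ell2 G) : ‖shift g x‖ = ‖x‖ := by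
  have h2 : 0 < (2 : ℝ≥0∞).toReal := by norm_num
  rw [lp.norm_eq_tsum_rpow h2, lp.norm_eq_tsum_rpow h2]
  congr 1
  exact ((Equiv.subRight g).tsum_eq fun h => ‖(x : ∀ _ : G, ℂ) h‖ ^ (2:ℝ≥0∞).toReal)

lemma invol_add (x y : ell2 G) : invol (x + y) = invol x + invol y := by
  ext g
  simp [invol_apply, lp.coeFn_add]

lemma invol_real_smul (c : ℝ) (x : ell2 G) : invol ((c : ℂ) • x) = (c : ℂ) • invol x := by
  ext g
  rw [invol_apply, lp.coeFn_smul, lp.coeFn_smul, Pi.smul_apply, Pi.smul_apply, invol_apply]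
  simp

lemma norm_invol (x : ell2 G) : ‖invol x‖ = ‖x‖ := by
  have h2 : 0 < (2 : ℝ≥0∞).toReal := by norm_num
  rw [lp.norm_eq_tsum_rpow h2, lp.norm_eq_tsum_rpow h2]
  congr 1
  have : ∀ h : G, ‖(invol x : ∀ _ : G, ℂ) h‖ ^ (2:ℝ≥0∞).toReal
      = ‖(x : ∀ _ : G, ℂ) (-h)‖ ^ (2:ℝ≥0∞).toReal := by
    intro h; rw [invol_apply, RCLike.norm_conj]
  rw [tsum_congr this]
  exact ((Equiv.neg G).tsum_eq fun h => ‖(x : ∀ _ : G, ℂ) h‖ ^ (2:ℝ≥0∞).toReal)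

/-- `shift` as a continuous linear map. -/
def shiftCLM (g : G) : ell2 G →L[ℂ] ell2 G :=
  LinearMap.mkContinuous
    { toFun := shift g, map_add' := shift_add g, map_smul' := shift_smul g } 1
    (fun x => by simp [norm_shift])

@[simp] lemma shiftCLM_apply (g : G) (x : ell2 G) : shiftCLM g x = shift g x := rfl

/-- `invol` as a continuous `ℝ`-linear map. -/
def involCLM : ell2 G →L[ℝ] ell2 G :=
  LinearMap.mkContinuous
    { toFun := invol, map_add' := invol_add,
      map_smul' := fun c x => invol_real_smul c x } 1
    (fun x => by rw [one_mul]; exact le_of_eq (norm_invol x))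

@[simp] lemma involCLM_apply (x : ell2 G) : involCLM x = invol x := rfl

/-- delta element of `ℓ²(G)`. -/
def dl [DecidableEq G] (g : G) (c : ℂ) : ell2 G := lp.single (E := fun _ : G => ℂ) 2 g c

lemma dl_apply [DecidableEq G] (g : G) (c : ℂ) (k : G) :
    (dl g c : ∀ _ : G, ℂ) k = if k = g then c else 0 := by
  by_cases h : k = g
  · subst h; rw [if_pos rfl]; exact lp.single_apply_self _ _ _
  · rw [if_neg h]; exact lp.single_apply_ne _ _ _ h

lemma shift_dl [DecidableEq G] (g h : G) (c : ℂ) : shift g (dl h c) = dl (h + g) c := by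
  ext k
  rw [shift_apply, dl_apply, dl_apply]
  by_cases hk : k - g = h
  · rw [if_pos hk, if_pos (by rw [← hk]; abel)]
  · rw [if_neg hk, if_neg (by intro hc; apply hk; rw [hc]; abel)]

lemma invol_dl [DecidableEq G] (h : G) (c : ℂ) : invol (dl h c) = dl (-h) (conj c) := by
  ext k
  rw [invol_apply, dl_apply, dl_apply]
  by_cases hk : -k = h
  · rw [if_pos hk, if_pos (by rw [← hk]; abel)]
  · rw [if_neg hk, if_neg (by intro hc; apply hk; rw [hc]; abel), map_zero]

lemma hasSum_dl [DecidableEq G] (x : ell2 G) :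
    HasSum (fun g => dl g ((x : ∀ _ : G, ℂ) g)) x :=
  lp.hasSum_single (by norm_num) x


end Aux1
section Aux2
variable {μ : Measure (GDual G)}



variable {μ : Measure (GDual G)}

lemma memℒp_conj {φ : GDual G → ℂ} {q : ℝ≥0∞} (hφ : MemLp φ q μ) :
    MemLp (fun ξ => conj (φ ξ)) q μ := by
  refine ⟨RCLike.continuous_conj.comp_aestronglyMeasurable hφ.1, ?_⟩
  rw [eLpNorm_congr_norm_ae (f := fun ξ => conj (φ ξ)) (g := φ)
    (Filter.Eventually.of_forall fun ξ => RCLike.norm_conj _)]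
  exact hφ.2

lemma memℒp_mul_of_top {φ ψ : GDual G → ℂ} (hφ : MemLp φ ∞ μ) (hψ : MemLp ψ ∞ μ) :
    MemLp (fun ξ => φ ξ * ψ ξ) ∞ μ := by
  have := hψ.smul (p := ∞) (r := ∞) hφ
  have he : (fun ξ => φ ξ * ψ ξ) = φ • ψ := by
    funext ξ; simp [Pi.smul_apply, smul_eq_mul, mul_comm]
  rw [he]
  exact this

lemma mulMem {φ : GDual G → ℂ} (hφ : MemLp φ ∞ μ) (f : Lp ℂ 2 μ) :
    MemLp (fun ξ => φ ξ * (f : GDual G → ℂ) ξ) 2 μ := by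
  have := (Lp.memLp f).smul (p := ∞) (r := 2) hφ
  have he : (fun ξ => φ ξ * (f : GDual G → ℂ) ξ) = φ • ⇑f := by
    funext ξ; simp [Pi.smul_apply, smul_eq_mul, mul_comm]
  rw [he]
  exact this

/-- multiplication by an essentially bounded function, as a continuous linear map on `L²`. -/
def mulL {φ : GDual G → ℂ} (hφ : MemLp φ ∞ μ) : Lp ℂ 2 μ →L[ℂ] Lp ℂ 2 μ :=
  LinearMap.mkContinuous
    { toFun := fun f => (mulMem hφ f).toLp _
      map_add' := by
        intro f g
        apply Lp.ext
        filter_upwards [MemLp.coeFn_toLp (mulMem hφ f), MemLp.coeFn_toLp (mulMem hφ g),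
          MemLp.coeFn_toLp (mulMem hφ (f + g)), Lp.coeFn_add f g,
          Lp.coeFn_add ((mulMem hφ f).toLp _) ((mulMem hφ g).toLp _)] with ξ h1 h2 h3 h4 h5
        rw [h3, h5, Pi.add_apply, h1, h2, h4, Pi.add_apply, mul_add]
      map_smul' := by
        intro c f
        apply Lp.ext
        filter_upwards [MemLp.coeFn_toLp (mulMem hφ f), MemLp.coeFn_toLp (mulMem hφ (c • f)),
          Lp.coeFn_smul c f, Lp.coeFn_smul c ((mulMem hφ f).toLp _)] with ξ h1 h2 h3 h4
        rw [h2, h3, Pi.smul_apply]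
        simp only [RingHom.id_apply] at h4 ⊢
        rw [h4, Pi.smul_apply, h1]
        simp [smul_eq_mul]
        ring }
    (eLpNorm φ ∞ μ).toReal
    (by
      intro f
      rw [LinearMap.coe_mk, AddHom.coe_mk, Lp.norm_toLp]
      have hb : eLpNorm (fun ξ => φ ξ * (f : GDual G → ℂ) ξ) 2 μ ≤
          eLpNorm φ ∞ μ * eLpNorm (f : GDual G → ℂ) 2 μ := by
        change eLpNorm (φ * (f : GDual G → ℂ)) 2 μ ≤ eLpNorm φ ∞ μ * eLpNorm (f : GDual G → ℂ) 2 μ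
        have := eLpNorm_smul_le_eLpNorm_top_mul_eLpNorm 2 (Lp.aestronglyMeasurable f) φ
        simpa [Pi.smul_apply, smul_eq_mul] using this
      calc (eLpNorm (fun ξ => φ ξ * (f : GDual G → ℂ) ξ) 2 μ).toReal
          ≤ (eLpNorm φ ∞ μ * eLpNorm (f : GDual G → ℂ) 2 μ).toReal := by
            apply ENNReal.toReal_mono _ hb
            exact ENNReal.mul_ne_top hφ.2.ne (Lp.eLpNorm_lt_top f).ne
        _ = (eLpNorm φ ∞ μ).toReal * ‖f‖ := by
            rw [ENNReal.toReal_mul, Lp.norm_def])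

lemma mulL_coe {φ : GDual G → ℂ} (hφ : MemLp φ ∞ μ) (f : Lp ℂ 2 μ) :
    ⇑(mulL hφ f) =ᵐ[μ] fun ξ => φ ξ * (f : GDual G → ℂ) ξ :=
  MemLp.coeFn_toLp (mulMem hφ f)

lemma mulL_inner_left {φ : GDual G → ℂ} (hφ : MemLp φ ∞ μ) (u v : Lp ℂ 2 μ) :
    (inner ℂ (mulL hφ u) v : ℂ) = inner ℂ u (mulL (memℒp_conj hφ) v) := by
  rw [L2.inner_def, L2.inner_def]
  apply integral_congr_ae
  filter_upwards [mulL_coe hφ u, mulL_coe (memℒp_conj hφ) v] with ξ h1 h2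
  rw [h1, h2, RCLike.inner_apply, RCLike.inner_apply]
  simp only [map_mul, Complex.conj_conj]
  ring


end Aux2
section Aux3
variable {μ : Measure (GDual G)}



variable {μ : Measure (GDual G)}

lemma pairingMem (g : G) : MemLp (fun ξ => pairing g ξ) ∞ μ :=
  memLp_top_of_bound (pairing_continuous g).aestronglyMeasurable 1
    (Filter.Eventually.of_forall fun ξ => le_of_eq (pairing_norm g ξ))

/-- conjugation on `L²` as a continuous `ℝ`-linear map. -/
def conjL : Lp ℂ 2 μ →L[ℝ] Lp ℂ 2 μ :=
  LinearMap.mkContinuous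
    { toFun := fun f => (memℒp_conj (Lp.memLp f)).toLp _
      map_add' := by
        intro f g
        apply Lp.ext
        filter_upwards [MemLp.coeFn_toLp (memℒp_conj (Lp.memLp f)),
          MemLp.coeFn_toLp (memℒp_conj (Lp.memLp g)),
          MemLp.coeFn_toLp (memℒp_conj (Lp.memLp (f + g))), Lp.coeFn_add f g,
          Lp.coeFn_add ((memℒp_conj (Lp.memLp f)).toLp _)
            ((memℒp_conj (Lp.memLp g)).toLp _)] with ξ h1 h2 h3 h4 h5
        rw [h3, h5, Pi.add_apply, h1, h2, h4, Pi.add_apply, map_add]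
      map_smul' := by
        intro c f
        apply Lp.ext
        filter_upwards [MemLp.coeFn_toLp (memℒp_conj (Lp.memLp f)),
          MemLp.coeFn_toLp (memℒp_conj (Lp.memLp (c • f))),
          Lp.coeFn_smul c f,
          Lp.coeFn_smul c ((memℒp_conj (Lp.memLp f)).toLp _)] with ξ h1 h2 h3 h4
        simp only [RingHom.id_apply] at h4 ⊢
        rw [h2, h3, Pi.smul_apply, h4, Pi.smul_apply, h1]
        simp }
    1
    (by
      intro f
      rw [LinearMap.coe_mk, AddHom.coe_mk, Lp.norm_toLp, one_mul, Lp.norm_def]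
      apply le_of_eq
      congr 1
      exact eLpNorm_congr_norm_ae
        (Filter.Eventually.of_forall fun ξ => RCLike.norm_conj _))

lemma conjL_coe (f : Lp ℂ 2 μ) :
    ⇑(conjL f) =ᵐ[μ] fun ξ => conj ((f : GDual G → ℂ) ξ) :=
  MemLp.coeFn_toLp (memℒp_conj (Lp.memLp f))


variable (F : ell2 G ≃ₗᵢ[ℂ] Lp ℂ 2 μ)

/-- `F` as a continuous linear map. -/
def Fclm : ell2 G →L[ℂ] Lp ℂ 2 μ :=
  (F.toContinuousLinearEquiv : ell2 G ≃L[ℂ] Lp ℂ 2 μ).toContinuousLinearMap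

@[simp] lemma Fclm_apply (y : ell2 G) : Fclm F y = F y := rfl

variable (hF : IsFourier μ F)
include hF

lemma F_dl [DecidableEq G] (g : G) (c : ℂ) :
    ⇑(F (dl g c)) =ᵐ[μ] fun ξ => c * pairing (-g) ξ := by
  have hs : Summable fun h => ‖(dl g c : ∀ _ : G, ℂ) h‖ := by
    apply summable_of_ne_finset_zero (s := {g})
    intro h hh
    rw [dl_apply, if_neg (by simpa using hh), norm_zero]
  refine (hF (dl g c) hs).trans (Filter.Eventually.of_forall fun ξ => ?_)
  show (∑' h : G, (dl g c : ∀ _ : G, ℂ) h * pairing (-h) ξ) = c * pairing (-g) ξ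
  rw [tsum_eq_single g (fun h hh => by rw [dl_apply, if_neg hh, zero_mul])]
  rw [dl_apply, if_pos rfl]

lemma F_shift (g : G) (y : ell2 G) :
    F (shift g y) = mulL (pairingMem (-g)) (F y) := by
  classical
  set T1 : ell2 G →L[ℂ] Lp ℂ 2 μ := (Fclm F).comp (shiftCLM g) with hT1
  set T2 : ell2 G →L[ℂ] Lp ℂ 2 μ := (mulL (pairingMem (-g))).comp (Fclm F) with hT2
  have hsingle : ∀ (h : G) (c : ℂ), T1 (dl h c) = T2 (dl h c) := by
    intro h c
    rw [hT1, hT2]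
    simp only [ContinuousLinearMap.comp_apply, Fclm_apply, shiftCLM_apply, shift_dl]
    apply Lp.ext
    filter_upwards [F_dl F hF (h + g) c, mulL_coe (pairingMem (-g)) (F (dl h c)),
      F_dl F hF h c] with ξ h1 h2 h3
    rw [h1, h2, h3]
    rw [show -(h + g) = -g + -h by abel, pairing_add]
    ring
  have h1 : HasSum (fun h => T1 (dl h ((y : ∀ _ : G, ℂ) h))) (T1 y) :=
    (hasSum_dl y).mapL T1
  have h2 : HasSum (fun h => T2 (dl h ((y : ∀ _ : G, ℂ) h))) (T2 y) :=
    (hasSum_dl y).mapL T2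
  have h1' : HasSum (fun h => T2 (dl h ((y : ∀ _ : G, ℂ) h))) (T1 y) := by
    exact h1.congr_fun fun h => (hsingle h _).symm
  have := h1'.unique h2
  simpa [hT1, hT2] using this

lemma F_invol (y : ell2 G) : F (invol y) = conjL (F y) := by
  classical
  set T1 : ell2 G →L[ℝ] Lp ℂ 2 μ := ((Fclm F).restrictScalars ℝ).comp involCLM with hT1
  set T2 : ell2 G →L[ℝ] Lp ℂ 2 μ := conjL.comp ((Fclm F).restrictScalars ℝ) with hT2
  have hsingle : ∀ (h : G) (c : ℂ), T1 (dl h c) = T2 (dl h c) := by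
    intro h c
    rw [hT1, hT2]
    simp only [ContinuousLinearMap.comp_apply, ContinuousLinearMap.coe_restrictScalars',
      Fclm_apply, involCLM_apply, invol_dl]
    apply Lp.ext
    filter_upwards [F_dl F hF (-h) (conj c), conjL_coe (F (dl h c)),
      F_dl F hF h c] with ξ h1 h2 h3
    rw [h1, h2, h3]
    simp only [map_mul, neg_neg]
    rw [pairing_neg h ξ, Complex.conj_conj]
  have h1 : HasSum (fun h => T1 (dl h ((y : ∀ _ : G, ℂ) h))) (T1 y) :=
    (hasSum_dl y).mapL T1
  have h2 : HasSum (fun h => T2 (dl h ((y : ∀ _ : G, ℂ) h))) (T2 y) :=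
    (hasSum_dl y).mapL T2
  have h1' : HasSum (fun h => T2 (dl h ((y : ∀ _ : G, ℂ) h))) (T1 y) :=
    h1.congr_fun fun h => (hsingle h _).symm
  have := h1'.unique h2
  simpa [hT1, hT2] using this


end Aux3
section Aux4
variable {μ : Measure (GDual G)}



variable {μ : Measure (GDual G)}

/-- ℓ² square-sum summability. -/
lemma ell2_sq_summable {ι : Type*} (f : lp (fun _ : ι => ℂ) 2) :
    Summable fun i => ‖(f : ∀ _ : ι, ℂ) i‖ ^ 2 := by
  have := (memℓp_gen_iff (p := 2) (by norm_num)).mp (lp.memℓp f)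
  have he : ∀ x : ℝ, x ^ (2 : ℝ≥0∞).toReal = x ^ (2 : ℕ) := by
    intro x
    rw [show (2 : ℝ≥0∞).toReal = ((2 : ℕ) : ℝ) by norm_num, Real.rpow_natCast]
  refine this.congr fun i => ?_
  rw [he]

lemma ell2_sq_tsum {ι : Type*} (f : lp (fun _ : ι => ℂ) 2) :
    ∑' i, ‖(f : ∀ _ : ι, ℂ) i‖ ^ 2 = ‖f‖ ^ 2 := by
  have h2 : 0 < (2 : ℝ≥0∞).toReal := by norm_num
  have he : ∀ x : ℝ, x ^ (2 : ℝ≥0∞).toReal = x ^ (2 : ℕ) := by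
    intro x
    rw [show (2 : ℝ≥0∞).toReal = ((2 : ℕ) : ℝ) by norm_num, Real.rpow_natCast]
  rw [lp.norm_eq_tsum_rpow h2 f]
  have hnn : (0:ℝ) ≤ ∑' i, ‖(f : ∀ _ : ι, ℂ) i‖ ^ (2 : ℝ≥0∞).toReal :=
    tsum_nonneg fun i => Real.rpow_nonneg (norm_nonneg _) _
  rw [show ((∑' i, ‖(f : ∀ _ : ι, ℂ) i‖ ^ (2:ℝ≥0∞).toReal) ^ (1 / (2:ℝ≥0∞).toReal)) ^ (2:ℕ)
      = ((∑' i, ‖(f : ∀ _ : ι, ℂ) i‖ ^ (2:ℝ≥0∞).toReal) ^ (1 / (2:ℝ≥0∞).toReal)) ^ (((2:ℕ)):ℝ)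
    from (Real.rpow_natCast _ 2).symm]
  rw [← Real.rpow_mul hnn]
  norm_num

variable (F : ell2 G ≃ₗᵢ[ℂ] Lp ℂ 2 μ)

/-- the Fourier images of the delta functions, a Hilbert basis of `L²`. -/
def eB : HilbertBasis G ℂ (Lp ℂ 2 μ) := HilbertBasis.ofRepr F.symm

lemma single_eq_dl [DecidableEq G] (g : G) :
    (lp.single (E := fun _ : G => ℂ) 2 g (1:ℂ)) = dl g 1 := by
  ext k
  by_cases h : k = g
  · subst h
    rw [lp.single_apply_self, dl_apply, if_pos rfl]
  · rw [lp.single_apply_ne _ _ _ h, dl_apply, if_neg h]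

lemma eB_repr_apply [DecidableEq G] (v : Lp ℂ 2 μ) (g : G) :
    ((eB F).repr v : ∀ _ : G, ℂ) g = (inner ℂ (F (dl g 1)) v : ℂ) := by
  rw [HilbertBasis.repr_apply_apply]
  congr 1
  rw [← HilbertBasis.repr_symm_single (eB F) g, single_eq_dl]
  exact rfl

lemma eB_hasSum [DecidableEq G] (v : Lp ℂ 2 μ) :
    HasSum (fun g => ((eB F).repr v : ∀ _ : G, ℂ) g • F (dl g 1)) v := by
  refine (HilbertBasis.hasSum_repr (eB F) v).congr_fun fun g => ?_
  congr 1
  rw [← HilbertBasis.repr_symm_single (eB F) g, single_eq_dl]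
  exact rfl

/-- Parseval for the basis `F (dl g 1)`. -/
lemma parseval_summable [DecidableEq G] (v : Lp ℂ 2 μ) :
    Summable fun g : G => ‖(inner ℂ (F (dl g 1)) v : ℂ)‖ ^ 2 := by
  refine (ell2_sq_summable ((eB F).repr v)).congr fun g => ?_
  rw [eB_repr_apply]

lemma parseval_tsum [DecidableEq G] (v : Lp ℂ 2 μ) :
    ∑' g : G, ‖(inner ℂ (F (dl g 1)) v : ℂ)‖ ^ 2 = ‖v‖ ^ 2 := by
  rw [← ((eB F).repr.norm_map v), ← ell2_sq_tsum ((eB F).repr v)]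
  exact tsum_congr fun g => by rw [eB_repr_apply]

section matOp
variable {NN MM : ℕ}

/-- the multiplication ("transfer matrix") operator associated with a matrix of essentially
bounded functions. -/
def matOp (φ : Fin MM → Fin NN → GDual G → ℂ) (hφ : ∀ m n, MemLp (φ m n) ∞ μ) :
    (PiLp 2 fun _ : Fin NN => Lp ℂ 2 μ) →L[ℂ] (PiLp 2 fun _ : Fin MM => Lp ℂ 2 μ) :=
  (PiLp.continuousLinearEquiv 2 ℂ (fun _ : Fin MM => Lp ℂ 2 μ)).symm.toContinuousLinearMap.comp
  (ContinuousLinearMap.pi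
    (fun m => ∑ n, (mulL (hφ m n)).comp (PiLp.proj (𝕜 := ℂ) 2 (fun _ : Fin NN => Lp ℂ 2 μ) n)))

lemma matOp_apply (φ : Fin MM → Fin NN → GDual G → ℂ) (hφ : ∀ m n, MemLp (φ m n) ∞ μ)
    (X : PiLp 2 fun _ : Fin NN => Lp ℂ 2 μ) (m : Fin MM) :
    matOp φ hφ X m = ∑ n, mulL (hφ m n) (X n) := by
  have h : matOp φ hφ X m =
      (∑ n, (mulL (hφ m n)).comp (PiLp.proj (𝕜 := ℂ) 2 (fun _ : Fin NN => Lp ℂ 2 μ) n)) X := rfl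
  rw [h, ContinuousLinearMap.sum_apply]
  rfl

/-- a.e. description of `matOp`. -/
lemma matOp_coe (φ : Fin MM → Fin NN → GDual G → ℂ) (hφ : ∀ m n, MemLp (φ m n) ∞ μ)
    (X : PiLp 2 fun _ : Fin NN => Lp ℂ 2 μ) (m : Fin MM) :
    ⇑(matOp φ hφ X m) =ᵐ[μ] fun ξ => ∑ n, φ m n ξ * ((X n : Lp ℂ 2 μ) : GDual G → ℂ) ξ := by
  rw [matOp_apply]
  have : ∀ s : Finset (Fin NN),
      ⇑((∑ n ∈ s, mulL (hφ m n) (X n) : Lp ℂ 2 μ)) =ᵐ[μ]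
        fun ξ => ∑ n ∈ s, φ m n ξ * ((X n : Lp ℂ 2 μ) : GDual G → ℂ) ξ := by
    intro s
    induction s using Finset.induction_on with
    | empty => simp only [Finset.sum_empty]; exact Lp.coeFn_zero ℂ 2 μ
    | insert a s' hns ih =>
      rw [Finset.sum_insert hns]
      filter_upwards [Lp.coeFn_add (mulL (hφ m a) (X a)) (∑ n ∈ s', mulL (hφ m n) (X n)),
        mulL_coe (hφ m a) (X a), ih] with ξ h1 h2 h3
      rw [h1, Pi.add_apply, h2, h3, Finset.sum_insert hns]
  exact this Finset.univ

end matOp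


end Aux4
section Aux5
variable {μ : Measure (GDual G)}



variable {μ : Measure (GDual G)}
variable (F : ell2 G ≃ₗᵢ[ℂ] Lp ℂ 2 μ)

/-- componentwise Fourier transform on `ℓ²_N(G)`. -/
def FN (NN : ℕ) : ell2N G NN ≃ₗᵢ[ℂ] PiLp 2 (fun _ : Fin NN => Lp ℂ 2 μ) :=
  LinearIsometryEquiv.piLpCongrRight 2 (fun _ => F)

lemma FN_apply {NN : ℕ} (x : ell2N G NN) (n : Fin NN) : FN F NN x n = F (x n) := by
  simp [FN, LinearIsometryEquiv.piLpCongrRight_apply]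

section key
variable (hF : IsFourier μ F)
include hF

/-- the fundamental coefficient formula. -/
lemma coeff_eq [DecidableEq G] {NN PP : ℕ} (C : Fin PP → Fin NN → ell2 G)
    (ψ : Fin PP → Fin NN → GDual G → ℂ) (hψ : ∀ p n, MemLp (ψ p n) ∞ μ)
    (hrep : ∀ p n, ⇑(F (C p n)) =ᵐ[μ] fun ξ => conj (ψ p n ξ))
    (x : ell2N G NN) (p : Fin PP) (g : G) :
    (inner ℂ (shiftN g (WithLp.toLp 2 fun n => C p n)) x : ℂ)
      = inner ℂ (F (dl g 1)) (matOp ψ hψ (FN F NN x) p) := by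
  have step1 : (inner ℂ (shiftN g (WithLp.toLp 2 fun n => C p n)) x : ℂ)
      = ∑ n, (inner ℂ (shift g (C p n)) (x n) : ℂ) := PiLp.inner_apply _ _
  rw [step1, matOp_apply, inner_sum]
  refine Finset.sum_congr rfl fun n _ => ?_
  rw [← F.inner_map_map (shift g (C p n)) (x n)]
  have hs : F (shift g (C p n)) = mulL (memℒp_conj (hψ p n)) (F (dl g 1)) := by
    rw [F_shift F hF]
    apply Lp.ext
    filter_upwards [mulL_coe (pairingMem (-g)) (F (C p n)), hrep p n,
      mulL_coe (memℒp_conj (hψ p n)) (F (dl g 1)), F_dl F hF g 1] with ξ h1 h2 h3 h4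
    rw [h1, h2, h3, h4]
    ring
  rw [hs, mulL_inner_left]
  congr 1
  rw [FN_apply]
  apply Lp.ext
  filter_upwards [mulL_coe (memℒp_conj (memℒp_conj (hψ p n))) (F (x n)),
    mulL_coe (hψ p n) (F (x n))] with ξ h1 h2
  rw [h1, h2, Complex.conj_conj]

end key

lemma frame_summable [DecidableEq G] {PP : ℕ} (Φ : Fin PP → Lp ℂ 2 μ) :
    Summable fun pg : Fin PP × G => ‖(inner ℂ (F (dl pg.2 1)) (Φ pg.1) : ℂ)‖ ^ 2 := by
  refine (summable_prod_of_nonneg fun pg => sq_nonneg _).mpr ?_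
  exact ⟨fun p => parseval_summable F (Φ p), Summable.of_finite⟩

lemma frame_tsum [DecidableEq G] {PP : ℕ} (Φ : Fin PP → Lp ℂ 2 μ) :
    ∑' pg : Fin PP × G, ‖(inner ℂ (F (dl pg.2 1)) (Φ pg.1) : ℂ)‖ ^ 2 = ∑ p, ‖Φ p‖ ^ 2 := by
  rw [Summable.tsum_prod (frame_summable F Φ), tsum_fintype]
  exact Finset.sum_congr rfl fun p _ => parseval_tsum F (Φ p)

/-- composing two transfer-matrix operators whose symbol product is a.e. the identity matrix. -/
lemma matOp_comp_id {NN MM : ℕ} (ψ : Fin NN → Fin MM → GDual G → ℂ)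
    (χ : Fin MM → Fin NN → GDual G → ℂ)
    (hψ : ∀ n m, MemLp (ψ n m) ∞ μ) (hχ : ∀ m n, MemLp (χ m n) ∞ μ)
    (h : ∀ᵐ ξ ∂μ, ∀ n k, ∑ m, ψ n m ξ * χ m k ξ = if n = k then 1 else 0)
    (X : PiLp 2 fun _ : Fin NN => Lp ℂ 2 μ) :
    matOp ψ hψ (matOp χ hχ X) = X := by
  apply PiLp.ext
  intro n
  apply Lp.ext
  filter_upwards [matOp_coe ψ hψ (matOp χ hχ X) n, h,
    ae_all_iff.mpr fun m => matOp_coe χ hχ X m] with ξ h1 h2 h3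
  rw [h1, Finset.sum_congr rfl fun m _ => by rw [h3 m]]
  have hswap : (∑ m, ψ n m ξ * ∑ k, χ m k ξ * ((X k : Lp ℂ 2 μ) : GDual G → ℂ) ξ)
      = ∑ k, (∑ m, ψ n m ξ * χ m k ξ) * ((X k : Lp ℂ 2 μ) : GDual G → ℂ) ξ := by
    simp only [Finset.mul_sum, Finset.sum_mul, mul_assoc]
    rw [Finset.sum_comm]
  rw [hswap, Finset.sum_congr rfl fun k _ => by rw [h2 n k]]
  simp [Finset.sum_ite_eq]

/-- extracting the a.e. symbol identity from the operator identity. -/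
lemma matOp_id_ae [IsFiniteMeasure μ] {NN MM : ℕ} (ψ : Fin NN → Fin MM → GDual G → ℂ)
    (χ : Fin MM → Fin NN → GDual G → ℂ)
    (hψ : ∀ n m, MemLp (ψ n m) ∞ μ) (hχ : ∀ m n, MemLp (χ m n) ∞ μ)
    (h : ∀ X, matOp ψ hψ (matOp χ hχ X) = X) :
    ∀ᵐ ξ ∂μ, ∀ n k, ∑ m, ψ n m ξ * χ m k ξ = if n = k then 1 else 0 := by
  classical
  rw [ae_all_iff]
  intro n
  rw [ae_all_iff]
  intro k
  set oneL : Lp ℂ 2 μ := (memLp_const (1:ℂ)).toLp _ with honeL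
  set X : PiLp 2 (fun _ : Fin NN => Lp ℂ 2 μ) := WithLp.toLp 2 fun j => if j = k then oneL else 0 with hX
  have hXn : matOp ψ hψ (matOp χ hχ X) n = X n := congrFun (congrArg WithLp.ofLp (h X)) n
  have hXcoe : ∀ j : Fin NN,
      ⇑((X j : Lp ℂ 2 μ)) =ᵐ[μ] fun _ => if j = k then (1:ℂ) else 0 := by
    intro j
    by_cases hj : j = k
    · subst hj
      simp only [hX, PiLp.toLp_apply, if_pos rfl, if_true]
      exact (MemLp.coeFn_toLp (memLp_const (1:ℂ))).mono fun ξ hξ => by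
        rw [hξ]
    · simp only [hX, PiLp.toLp_apply, if_neg hj]
      exact (Lp.coeFn_zero ℂ 2 μ).mono fun ξ hξ => by
        rw [hξ]; simp [hj]
  have hcongr : ⇑(matOp ψ hψ (matOp χ hχ X) n) =ᵐ[μ] ⇑((X n : Lp ℂ 2 μ)) := by
    rw [hXn]
  filter_upwards [matOp_coe ψ hψ (matOp χ hχ X) n,
    ae_all_iff.mpr fun m => matOp_coe χ hχ X m,
    ae_all_iff.mpr hXcoe, hcongr] with ξ h1 h2 h3 h4
  have hXn_val : ((X n : Lp ℂ 2 μ) : GDual G → ℂ) ξ = if n = k then 1 else 0 := h3 n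
  have hmid : ∀ m, ((matOp χ hχ X m : Lp ℂ 2 μ) : GDual G → ℂ) ξ = χ m k ξ := by
    intro m
    rw [h2 m, Finset.sum_congr rfl fun j _ => by rw [h3 j]]
    simp [Finset.sum_ite_eq]
  have := h4
  rw [h1, hXn_val] at this
  rw [← this]
  exact Finset.sum_congr rfl fun m _ => by rw [hmid m]


end Aux5
section Aux6
variable {μ : Measure (GDual G)}



variable {μ : Measure (GDual G)}
variable (F : ell2 G ≃ₗᵢ[ℂ] Lp ℂ 2 μ)

/-- frame sums as `L²` norms of the transfer operator image. -/
lemma frame_char [DecidableEq G] (hF : IsFourier μ F) {MM NN : ℕ}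
    (Cmat : Fin MM → Fin NN → ell2 G) (ψ : Fin MM → Fin NN → GDual G → ℂ)
    (hψ : ∀ m n, MemLp (ψ m n) ∞ μ)
    (hrep : ∀ m n, ⇑(F (Cmat m n)) =ᵐ[μ] fun ξ => conj (ψ m n ξ)) (x : ell2N G NN) :
    Summable (fun p : Fin MM × G =>
      ‖(inner ℂ x (shiftN p.2 (WithLp.toLp 2 fun n => Cmat p.1 n)) : ℂ)‖ ^ 2) ∧
    ∑' p : Fin MM × G, ‖(inner ℂ x (shiftN p.2 (WithLp.toLp 2 fun n => Cmat p.1 n)) : ℂ)‖ ^ 2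
      = ‖matOp ψ hψ (FN F NN x)‖ ^ 2 := by
  have hcoeff : ∀ (p : Fin MM × G),
      ‖(inner ℂ x (shiftN p.2 (WithLp.toLp 2 fun n => Cmat p.1 n)) : ℂ)‖ ^ 2
        = ‖(inner ℂ (F (dl p.2 1)) (matOp ψ hψ (FN F NN x) p.1) : ℂ)‖ ^ 2 := by
    intro p
    rw [norm_inner_symm, coeff_eq F hF Cmat ψ hψ hrep x p.1 p.2]
  constructor
  · exact (frame_summable F fun m => matOp ψ hψ (FN F NN x) m).congr
      fun p => (hcoeff p).symm
  · rw [tsum_congr hcoeff, frame_tsum F fun m => matOp ψ hψ (FN F NN x) m,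
      PiLp.norm_sq_eq_of_L2]

section duality
variable (hF : IsFourier μ F)
include hF

lemma duality_char [DecidableEq G] {MM NN : ℕ}
    (Cmat : Fin MM → Fin NN → ell2 G) (ψ : Fin MM → Fin NN → GDual G → ℂ)
    (hψ : ∀ m n, MemLp (ψ m n) ∞ μ)
    (hrep : ∀ m n, ⇑(F (Cmat m n)) =ᵐ[μ] fun ξ => conj (ψ m n ξ))
    (Bmat : Fin NN → Fin MM → ell2 G) (φB : Fin NN → Fin MM → GDual G → ℂ)
    (hφB : ∀ n m, MemLp (φB n m) ∞ μ)
    (hrepB : ∀ n m, ⇑(F (Bmat n m)) =ᵐ[μ] φB n m) :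
    (∀ x : ell2N G NN, HasSum (fun p : Fin MM × G =>
        (inner ℂ (shiftN p.2 (WithLp.toLp 2 fun n => Cmat p.1 n)) x : ℂ) • shiftN p.2 (WithLp.toLp 2 (fun n => Bmat n p.1))) x)
      ↔ ∀ X : PiLp 2 (fun _ : Fin NN => Lp ℂ 2 μ),
          matOp φB hφB (matOp ψ hψ X) = X := by
  set FNe : ell2N G NN ≃L[ℂ] PiLp 2 (fun _ : Fin NN => Lp ℂ 2 μ) :=
    (FN F NN).toContinuousLinearEquiv with hFNe
  have hshiftB : ∀ (m : Fin MM) (g : G) (n : Fin NN),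
      F (shift g (Bmat n m)) = mulL (hφB n m) (F (dl g 1)) := by
    intro m g n
    rw [F_shift F hF]
    apply Lp.ext
    filter_upwards [mulL_coe (pairingMem (-g)) (F (Bmat n m)), hrepB n m,
      mulL_coe (hφB n m) (F (dl g 1)), F_dl F hF g 1] with ξ h1 h2 h3 h4
    rw [h1, h2, h3, h4]
    ring
  have hterm : ∀ (x : ell2N G NN) (p : Fin MM × G),
      FN F NN ((inner ℂ (shiftN p.2 (WithLp.toLp 2 fun n => Cmat p.1 n)) x : ℂ)
          • shiftN p.2 (WithLp.toLp 2 (fun n => Bmat n p.1)))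
      = (inner ℂ (F (dl p.2 1)) (matOp ψ hψ (FN F NN x) p.1) : ℂ)
          • (WithLp.toLp 2 fun n => mulL (hφB n p.1) (F (dl p.2 1)) :
              PiLp 2 fun _ : Fin NN => Lp ℂ 2 μ) := by
    intro x p
    rw [LinearIsometryEquiv.map_smul, coeff_eq F hF Cmat ψ hψ hrep x p.1 p.2]
    congr 1
    apply PiLp.ext
    intro n
    rw [FN_apply]
    exact hshiftB p.1 p.2 n
  have hfiber : ∀ (Y : PiLp 2 fun _ : Fin MM => Lp ℂ 2 μ) (m : Fin MM),
      HasSum (fun g : G => (inner ℂ (F (dl g 1)) (Y m) : ℂ)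
          • (WithLp.toLp 2 fun n => mulL (hφB n m) (F (dl g 1)) : PiLp 2 fun _ : Fin NN => Lp ℂ 2 μ))
        (WithLp.toLp 2 fun n => mulL (hφB n m) (Y m)) := by
    intro Y m
    refine ((PiLp.continuousLinearEquiv 2 ℂ (fun _ : Fin NN => Lp ℂ 2 μ)).hasSum).mp
      (Pi.hasSum.mpr fun n => ?_)
    have h := (eB_hasSum F (Y m)).mapL (mulL (hφB n m))
    refine h.congr_fun fun g => ?_
    show (inner ℂ (F (dl g 1)) (Y m) : ℂ) • mulL (hφB n m) (F (dl g 1))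
        = mulL (hφB n m) (((eB F).repr (Y m) : ∀ _ : G, ℂ) g • F (dl g 1))
    rw [_root_.map_smul (mulL (hφB n m)), eB_repr_apply]
  have htot : ∀ (Y : PiLp 2 fun _ : Fin MM => Lp ℂ 2 μ),
      (∑ m, (WithLp.toLp 2 fun n => mulL (hφB n m) (Y m) : PiLp 2 fun _ : Fin NN => Lp ℂ 2 μ))
        = matOp φB hφB Y := by
    intro Y
    apply PiLp.ext
    intro n
    rw [matOp_apply, WithLp.ofLp_sum, Finset.sum_apply]
  have hassemble : ∀ (Y : PiLp 2 fun _ : Fin MM => Lp ℂ 2 μ),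
      HasSum (fun p : Fin MM × G => (inner ℂ (F (dl p.2 1)) (Y p.1) : ℂ)
          • (WithLp.toLp 2 fun n => mulL (hφB n p.1) (F (dl p.2 1)) :
              PiLp 2 fun _ : Fin NN => Lp ℂ 2 μ))
        (matOp φB hφB Y) := by
    intro Y
    set w : Fin MM × G → PiLp 2 (fun _ : Fin NN => Lp ℂ 2 μ) :=
      fun p => (inner ℂ (F (dl p.2 1)) (Y p.1) : ℂ)
          • (WithLp.toLp 2 fun n => mulL (hφB n p.1) (F (dl p.2 1))) with hw
    have hwm : ∀ m : Fin MM, HasSum (fun p : Fin MM × G => if p.1 = m then w p else 0)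
        (WithLp.toLp 2 fun n => mulL (hφB n m) (Y m)) := by
      intro m
      have hinj : Function.Injective (fun g : G => ((m, g) : Fin MM × G)) := by
        intro a b hab
        simpa using congrArg Prod.snd hab
      refine (hinj.hasSum_iff ?_).mp ?_
      · intro p hp
        rw [if_neg]
        intro hpm
        exact hp ⟨p.2, Prod.ext hpm.symm rfl⟩
      · refine (hfiber Y m).congr_fun fun g => ?_
        show (if ((m, g) : Fin MM × G).1 = m then w (m, g) else 0) = _
        rw [if_pos rfl]
    have hsum2 : HasSum (fun p : Fin MM × G => ∑ m, if p.1 = m then w p else 0)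
        (∑ m, (WithLp.toLp 2 fun n => mulL (hφB n m) (Y m) : PiLp 2 fun _ : Fin NN => Lp ℂ 2 μ)) :=
      hasSum_sum fun m _ => hwm m
    have hptw : ∀ p : Fin MM × G, w p = (∑ m, if p.1 = m then w p else 0) := by
      intro p
      rw [Finset.sum_ite_eq Finset.univ p.1 (fun _ => w p), if_pos (Finset.mem_univ _)]
    rw [← htot Y]
    exact hsum2.congr_fun hptw
  constructor
  · intro hdual X
    obtain ⟨x, rfl⟩ : ∃ x : ell2N G NN, FN F NN x = X :=
      ⟨(FN F NN).symm X, (FN F NN).apply_symm_apply X⟩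
    have h1 : HasSum (fun p : Fin MM × G =>
        FN F NN ((inner ℂ (shiftN p.2 (WithLp.toLp 2 fun n => Cmat p.1 n)) x : ℂ)
          • shiftN p.2 (WithLp.toLp 2 (fun n => Bmat n p.1)))) (FN F NN x) :=
      (hdual x).mapL (FNe : ell2N G NN →L[ℂ] PiLp 2 (fun _ : Fin NN => Lp ℂ 2 μ))
    have h2 : HasSum (fun p : Fin MM × G =>
        (inner ℂ (F (dl p.2 1)) (matOp ψ hψ (FN F NN x) p.1) : ℂ)
          • (WithLp.toLp 2 fun n => mulL (hφB n p.1) (F (dl p.2 1)) :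
              PiLp 2 fun _ : Fin NN => Lp ℂ 2 μ)) (FN F NN x) :=
      h1.congr_fun fun p => (hterm x p).symm
    have hfin : HasSum (fun m : Fin MM =>
        (WithLp.toLp 2 fun n => mulL (hφB n m) (matOp ψ hψ (FN F NN x) m) :
          PiLp 2 fun _ : Fin NN => Lp ℂ 2 μ)) (FN F NN x) :=
      h2.prod_fiberwise fun m => hfiber (matOp ψ hψ (FN F NN x)) m
    have := (hasSum_fintype (fun m : Fin MM =>
        (WithLp.toLp 2 fun n => mulL (hφB n m) (matOp ψ hψ (FN F NN x) m) :
          PiLp 2 fun _ : Fin NN => Lp ℂ 2 μ))).unique hfin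
    rw [← htot (matOp ψ hψ (FN F NN x))]
    exact this
  · intro hid x
    have h2 : HasSum (fun p : Fin MM × G =>
        (inner ℂ (F (dl p.2 1)) (matOp ψ hψ (FN F NN x) p.1) : ℂ)
          • (WithLp.toLp 2 fun n => mulL (hφB n p.1) (F (dl p.2 1)) :
              PiLp 2 fun _ : Fin NN => Lp ℂ 2 μ)) (FN F NN x) := by
      have := hassemble (matOp ψ hψ (FN F NN x))
      rw [hid (FN F NN x)] at this
      exact this
    have h3 := h2.mapL (FNe.symm : PiLp 2 (fun _ : Fin NN => Lp ℂ 2 μ) →L[ℂ] ell2N G NN)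
    simp only [ContinuousLinearEquiv.coe_coe] at h3
    have h4 : FNe.symm (FN F NN x) = x := by
      show (FN F NN).toContinuousLinearEquiv.symm ((FN F NN) x) = x
      exact (FN F NN).toContinuousLinearEquiv.symm_apply_apply x
    rw [h4] at h3
    refine h3.congr_fun fun p => ?_
    rw [← hterm x p]
    show ((inner ℂ (shiftN p.2 (WithLp.toLp 2 fun n => Cmat p.1 n)) x : ℂ)
        • shiftN p.2 (WithLp.toLp 2 (fun n => Bmat n p.1))) = FNe.symm (FNe _)
    rw [FNe.symm_apply_apply]
end duality


end Aux6

/-- The sequences `{T_g a*_m}` and `{T_g b_m}` form a pair of dual frames for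
`ℓ²_N(G)` iff `B̂(ξ)Â(ξ) = I_N` for a.e. `ξ ∈ Ĝ`. -/
theorem statement11
    (μ : Measure (GDual G)) [IsProbabilityMeasure μ] [μ.IsHaarMeasure]
    (F : ell2 G ≃ₗᵢ[ℂ] Lp ℂ 2 μ) (hF : IsFourier μ F)
    {M N : ℕ}
    (A : Fin M → Fin N → ell2 G)
    (Ahat : GDual G → Matrix (Fin M) (Fin N) ℂ)
    (hAhat : ∀ m n, (fun ξ => Ahat ξ m n) =ᵐ[μ] ⇑(F (A m n)))
    (hAbd : ∀ m n, MemLp (fun ξ => Ahat ξ m n) ∞ μ)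
    (B : Fin N → Fin M → ell2 G)
    (Bhat : GDual G → Matrix (Fin N) (Fin M) ℂ)
    (hBhat : ∀ n m, (fun ξ => Bhat ξ n m) =ᵐ[μ] ⇑(F (B n m)))
    (hBbd : ∀ n m, MemLp (fun ξ => Bhat ξ n m) ∞ μ) :
    ((∃ α β : ℝ, 0 < α ∧ α ≤ β ∧
        IsFrameFamily (fun p : Fin M × G => shiftN p.2 (WithLp.toLp 2 (fun n => invol (A p.1 n)))) α β) ∧
     (∃ α β : ℝ, 0 < α ∧ α ≤ β ∧
        IsFrameFamily (fun p : Fin M × G => shiftN p.2 (WithLp.toLp 2 (fun n => B n p.1))) α β) ∧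
     (∀ x : ell2N G N, HasSum
        (fun p : Fin M × G =>
          (inner ℂ (shiftN p.2 (WithLp.toLp 2 (fun n => invol (A p.1 n)))) x : ℂ) • shiftN p.2 (WithLp.toLp 2 (fun n => B n p.1)))
        x))
      ↔ ∀ᵐ ξ ∂μ, Bhat ξ * Ahat ξ = 1 := by
  classical
  have hφBHmem : ∀ (m : Fin M) (n : Fin N),
      MemLp (fun ξ => conj (Bhat ξ n m)) ∞ μ := fun m n => memℒp_conj (hBbd n m)
  have hφAHmem : ∀ (n : Fin N) (m : Fin M),
      MemLp (fun ξ => conj (Ahat ξ m n)) ∞ μ := fun n m => memℒp_conj (hAbd m n)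
  have hrepA : ∀ m n, ⇑(F (invol (A m n))) =ᵐ[μ]
      fun ξ => conj ((fun (m : Fin M) (n : Fin N) ξ => Ahat ξ m n) m n ξ) := by
    intro m n
    rw [F_invol F hF]
    refine (conjL_coe (F (A m n))).trans ?_
    filter_upwards [hAhat m n] with ξ h
    rw [← h]
  have hrepBH : ∀ (m : Fin M) (n : Fin N), ⇑(F (B n m)) =ᵐ[μ]
      fun ξ => conj ((fun (m : Fin M) (n : Fin N) ξ => conj (Bhat ξ n m)) m n ξ) := by
    intro m n
    filter_upwards [hBhat n m] with ξ h
    rw [Complex.conj_conj, ← h]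
  have hrepB' : ∀ n m, ⇑(F (B n m)) =ᵐ[μ] (fun (n : Fin N) (m : Fin M) ξ => Bhat ξ n m) n m :=
    fun n m => (hBhat n m).symm
  have hdual_iff := duality_char F hF (fun m n => invol (A m n))
    (fun m n ξ => Ahat ξ m n) hAbd hrepA B (fun n m ξ => Bhat ξ n m) hBbd hrepB'
  constructor
  · rintro ⟨-, -, hsum⟩
    have hid : ∀ X, matOp (fun n m ξ => Bhat ξ n m) hBbd
        (matOp (fun m n ξ => Ahat ξ m n) hAbd X) = X := hdual_iff.mp hsum
    have hae := matOp_id_ae (fun n m ξ => Bhat ξ n m) (fun m n ξ => Ahat ξ m n)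
      hBbd hAbd hid
    filter_upwards [hae] with ξ h
    ext n k
    rw [Matrix.mul_apply, Matrix.one_apply]
    exact h n k
  · intro hBA
    have hprod1 : ∀ᵐ ξ ∂μ, ∀ (n k : Fin N),
        ∑ m, Bhat ξ n m * Ahat ξ m k = if n = k then 1 else 0 := by
      filter_upwards [hBA] with ξ h n k
      rw [← Matrix.mul_apply, h, Matrix.one_apply]
    have hprod2 : ∀ᵐ ξ ∂μ, ∀ (n k : Fin N),
        ∑ m, conj (Ahat ξ m n) * conj (Bhat ξ k m) = if n = k then 1 else 0 := by
      filter_upwards [hBA] with ξ h n k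
      have h1 : ∑ m, conj (Ahat ξ m n) * conj (Bhat ξ k m)
          = conj (∑ m, Bhat ξ k m * Ahat ξ m n) := by
        rw [map_sum]
        exact Finset.sum_congr rfl fun m _ => by rw [map_mul]; ring
      rw [h1, ← Matrix.mul_apply, h, Matrix.one_apply]
      by_cases hnk : n = k
      · subst hnk
        simp
      · rw [if_neg (fun hh => hnk hh.symm), if_neg hnk, map_zero]
    have hid1 : ∀ X, matOp (fun n m ξ => Bhat ξ n m) hBbd
        (matOp (fun m n ξ => Ahat ξ m n) hAbd X) = X :=
      fun X => matOp_comp_id _ _ _ _ hprod1 X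
    have hid2 : ∀ X, matOp (fun n m ξ => conj (Ahat ξ m n)) hφAHmem
        (matOp (fun m n ξ => conj (Bhat ξ n m)) hφBHmem X) = X :=
      fun X => matOp_comp_id _ _ _ _ hprod2 X
    refine ⟨?_, ?_, hdual_iff.mpr hid1⟩
    · -- the analysis family of A
      refine ⟨(‖matOp (fun n m ξ => Bhat ξ n m) hBbd‖^2+1)⁻¹,
        ‖matOp (fun m n ξ => Ahat ξ m n) hAbd‖^2
          + (‖matOp (fun n m ξ => Bhat ξ n m) hBbd‖^2+1)⁻¹,
        by positivity, le_add_of_nonneg_left (sq_nonneg _), ?_⟩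
      intro f
      obtain ⟨hsummable, htsum⟩ :=
        frame_char F hF (fun m n => invol (A m n)) (fun m n ξ => Ahat ξ m n) hAbd hrepA f
      refine ⟨hsummable, ?_, ?_⟩
      · rw [htsum]
        have hXn : ‖f‖ = ‖FN F N f‖ := ((FN F N).norm_map f).symm
        have hle : ‖FN F N f‖^2 ≤ (‖matOp (fun n m ξ => Bhat ξ n m) hBbd‖^2+1)
            * ‖matOp (fun m n ξ => Ahat ξ m n) hAbd (FN F N f)‖^2 := by
          have h1 : FN F N f = matOp (fun n m ξ => Bhat ξ n m) hBbd
              (matOp (fun m n ξ => Ahat ξ m n) hAbd (FN F N f)) := (hid1 _).symm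
          have h2 : ‖matOp (fun n m ξ => Bhat ξ n m) hBbd
              (matOp (fun m n ξ => Ahat ξ m n) hAbd (FN F N f))‖^2
              ≤ ‖matOp (fun n m ξ => Bhat ξ n m) hBbd‖^2
                * ‖matOp (fun m n ξ => Ahat ξ m n) hAbd (FN F N f)‖^2 := by
            rw [← mul_pow]
            exact pow_le_pow_left₀ (norm_nonneg _) (ContinuousLinearMap.le_opNorm _ _) 2
          nlinarith [sq_nonneg ‖matOp (fun m n ξ => Ahat ξ m n) hAbd (FN F N f)‖,
            congrArg (fun z => ‖z‖^2) h1]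
        rw [hXn, inv_mul_le_iff₀ (by positivity)]
        exact hle
      · rw [htsum]
        have h2 : ‖matOp (fun m n ξ => Ahat ξ m n) hAbd (FN F N f)‖^2
            ≤ ‖matOp (fun m n ξ => Ahat ξ m n) hAbd‖^2 * ‖FN F N f‖^2 := by
          rw [← mul_pow]
          exact pow_le_pow_left₀ (norm_nonneg _) (ContinuousLinearMap.le_opNorm _ _) 2
        have hXn : ‖FN F N f‖ = ‖f‖ := (FN F N).norm_map f
        rw [hXn] at h2
        have h3 : (0:ℝ) ≤ (‖matOp (fun n m ξ => Bhat ξ n m) hBbd‖^2+1)⁻¹ * ‖f‖^2 := by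
          positivity
        rw [add_mul]
        linarith
    · -- the family of B
      refine ⟨(‖matOp (fun n m ξ => conj (Ahat ξ m n)) hφAHmem‖^2+1)⁻¹,
        ‖matOp (fun m n ξ => conj (Bhat ξ n m)) hφBHmem‖^2
          + (‖matOp (fun n m ξ => conj (Ahat ξ m n)) hφAHmem‖^2+1)⁻¹,
        by positivity, le_add_of_nonneg_left (sq_nonneg _), ?_⟩
      intro f
      obtain ⟨hsummable, htsum⟩ :=
        frame_char F hF (fun m n => B n m) (fun m n ξ => conj (Bhat ξ n m)) hφBHmem hrepBH f
      refine ⟨hsummable, ?_, ?_⟩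
      · rw [htsum]
        have hXn : ‖f‖ = ‖FN F N f‖ := ((FN F N).norm_map f).symm
        have hle : ‖FN F N f‖^2 ≤ (‖matOp (fun n m ξ => conj (Ahat ξ m n)) hφAHmem‖^2+1)
            * ‖matOp (fun m n ξ => conj (Bhat ξ n m)) hφBHmem (FN F N f)‖^2 := by
          have h1 : FN F N f = matOp (fun n m ξ => conj (Ahat ξ m n)) hφAHmem
              (matOp (fun m n ξ => conj (Bhat ξ n m)) hφBHmem (FN F N f)) := (hid2 _).symm
          have h2 : ‖matOp (fun n m ξ => conj (Ahat ξ m n)) hφAHmem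
              (matOp (fun m n ξ => conj (Bhat ξ n m)) hφBHmem (FN F N f))‖^2
              ≤ ‖matOp (fun n m ξ => conj (Ahat ξ m n)) hφAHmem‖^2
                * ‖matOp (fun m n ξ => conj (Bhat ξ n m)) hφBHmem (FN F N f)‖^2 := by
            rw [← mul_pow]
            exact pow_le_pow_left₀ (norm_nonneg _) (ContinuousLinearMap.le_opNorm _ _) 2
          nlinarith [sq_nonneg ‖matOp (fun m n ξ => conj (Bhat ξ n m)) hφBHmem (FN F N f)‖,
            congrArg (fun z => ‖z‖^2) h1]
        rw [hXn, inv_mul_le_iff₀ (by positivity)]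
        exact hle
      · rw [htsum]
        have h2 : ‖matOp (fun m n ξ => conj (Bhat ξ n m)) hφBHmem (FN F N f)‖^2
            ≤ ‖matOp (fun m n ξ => conj (Bhat ξ n m)) hφBHmem‖^2 * ‖FN F N f‖^2 := by
          rw [← mul_pow]
          exact pow_le_pow_left₀ (norm_nonneg _) (ContinuousLinearMap.le_opNorm _ _) 2
        have hXn : ‖FN F N f‖ = ‖f‖ := (FN F N).norm_map f
        rw [hXn] at h2
        have h3 : (0:ℝ) ≤ (‖matOp (fun n m ξ => conj (Ahat ξ m n)) hφAHmem‖^2+1)⁻¹ * ‖f‖^2 := by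
          positivity
        rw [add_mul]
        linarith


end GroupSampling
end
end

section
/- Let G be a countable discrete subgroup of a locally compact abelian group G̃, let t ↦ U(t) be a unitary representation of G̃ on L²(G̃), and let φ_1,…,φ_N ∈ L²(G̃). Then the following are equivalent: (i) for every coefficient family {x_n(g)}_{g∈G, n=1,…,N} ∈ ℓ²_N(G), the series Σ_{n=1}^N Σ_{g∈G} x_n(g)·[U(g)φ_n](t) converges pointwise to a continuous bounded function on G̃; (ii) for each g ∈ G and n = 1,…,N the function U(g)φ_n is continuous on G̃, and sup_{t∈G̃} Σ_{g∈G} |[U(g)φ_n](t)|² < +∞ for each n = 1,…,N. -/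
open scoped ComplexConjugate ENNReal Matrix
open MeasureTheory

noncomputable section

namespace GroupSampling

variable {G : Type*} [AddCommGroup G] [Countable G] [TopologicalSpace G] [DiscreteTopology G]

variable [MeasurableSpace (GDual G)] [BorelSpace (GDual G)] [CompactSpace (GDual G)]

section
open scoped NNReal
/-! ### auxiliary lemmas for Statement 19 -/


section Aux

variable {ι : Type*}

lemma aux_summable_mul_of_sq {f g : ι → ℝ} (hf0 : ∀ i, 0 ≤ f i) (hg0 : ∀ i, 0 ≤ g i)
    (hf : Summable fun i => f i ^ 2) (hg : Summable fun i => g i ^ 2) :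
    Summable fun i => f i * g i := by
  refine Summable.of_nonneg_of_le (fun i => mul_nonneg (hf0 i) (hg0 i)) (fun i => ?_)
    ((hf.add hg).div_const 2)
  have h := sq_nonneg (f i - g i)
  nlinarith

lemma aux_tsum_mul_le_sqrt {f g : ι → ℝ} (hf0 : ∀ i, 0 ≤ f i) (hg0 : ∀ i, 0 ≤ g i)
    (hf : Summable fun i => f i ^ 2) (hg : Summable fun i => g i ^ 2) :
    ∑' i, f i * g i ≤ Real.sqrt (∑' i, f i ^ 2) * Real.sqrt (∑' i, g i ^ 2) := by
  refine Summable.tsum_le_of_sum_le (aux_summable_mul_of_sq hf0 hg0 hf hg) (fun s => ?_)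
  have h1 : (∑ i ∈ s, f i * g i) ^ 2 ≤ (∑ i ∈ s, f i ^ 2) * ∑ i ∈ s, g i ^ 2 :=
    Finset.sum_mul_sq_le_sq_mul_sq s f g
  have h2 : ∑ i ∈ s, f i * g i ≤ Real.sqrt ((∑ i ∈ s, f i ^ 2) * ∑ i ∈ s, g i ^ 2) := by
    have := Real.sqrt_le_sqrt h1
    rwa [Real.sqrt_sq (Finset.sum_nonneg fun i _ => mul_nonneg (hf0 i) (hg0 i))] at this
  refine h2.trans ?_
  rw [Real.sqrt_mul (Finset.sum_nonneg fun i _ => sq_nonneg _)]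
  gcongr
  · exact Summable.sum_le_tsum s (fun i _ => sq_nonneg _) hf
  · exact Summable.sum_le_tsum s (fun i _ => sq_nonneg _) hg

lemma aux_le_sq_of_le_mul_sqrt {s C : ℝ} (hs : 0 ≤ s) (hC : 0 ≤ C)
    (h : s ≤ C * Real.sqrt s) : s ≤ C ^ 2 := by
  rcases eq_or_lt_of_le hs with h0 | h0
  · nlinarith
  · have hsq : Real.sqrt s > 0 := Real.sqrt_pos.2 h0
    have h1 : Real.sqrt s ≤ C := by
      have hss : s = Real.sqrt s * Real.sqrt s := (Real.mul_self_sqrt hs).symm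
      nlinarith
    nlinarith [Real.sq_sqrt hs]

/-- Cauchy–Schwarz for infinite sums of products of complex numbers. -/
lemma aux_norm_tsum_mul_le {b c : ι → ℂ} (hb : Summable fun i => ‖b i‖ ^ 2)
    (hc : Summable fun i => ‖c i‖ ^ 2) :
    ‖∑' i, b i * c i‖ ≤ Real.sqrt (∑' i, ‖b i‖ ^ 2) * Real.sqrt (∑' i, ‖c i‖ ^ 2) := by
  have habs : Summable fun i => ‖b i * c i‖ := by
    simpa [norm_mul] using
      aux_summable_mul_of_sq (fun i => norm_nonneg (b i)) (fun i => norm_nonneg (c i)) hb hc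
  calc ‖∑' i, b i * c i‖ ≤ ∑' i, ‖b i * c i‖ := norm_tsum_le_tsum_norm habs
  _ = ∑' i, ‖b i‖ * ‖c i‖ := by simp [norm_mul]
  _ ≤ _ := aux_tsum_mul_le_sqrt (fun i => norm_nonneg _) (fun i => norm_nonneg _) hb hc

lemma aux_enn_tsum_eq_ofReal {z : ι → ℂ} (h : Summable fun i => ‖z i‖ ^ 2) :
    ∑' i, ((‖z i‖₊ : ℝ≥0∞) ^ 2) = ENNReal.ofReal (∑' i, ‖z i‖ ^ 2) := by
  rw [ENNReal.ofReal_tsum_of_nonneg (fun _ => sq_nonneg _) h]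
  refine tsum_congr fun i => ?_
  rw [ENNReal.ofReal_pow (norm_nonneg _), ← coe_nnnorm, ENNReal.ofReal_coe_nnreal]

end Aux

section Ell2N

variable {G : Type*} {N : ℕ}

lemma aux_slice_summable (x : ell2N G N) (n : Fin N) :
    Summable fun g : G => ‖(x n : ∀ _ : G, ℂ) g‖ ^ 2 := by
  have hx : Summable fun g => ‖(x n : ∀ _ : G, ℂ) g‖ ^ (2 : ℝ≥0∞).toReal :=
    (memℓp_gen_iff (by norm_num)).mp (lp.memℓp (x n))
  have h2 : (2 : ℝ≥0∞).toReal = (2 : ℝ) := by norm_num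
  rw [h2] at hx
  simpa [Real.rpow_natCast] using hx

lemma aux_memℓp_of_sq {f : G → ℂ} (hf : Summable fun g => ‖f g‖ ^ 2) :
    Memℓp f (2 : ℝ≥0∞) := by
  refine memℓp_gen ?_
  have h2 : (2 : ℝ≥0∞).toReal = (2 : ℝ) := by norm_num
  rw [h2]
  simpa [Real.rpow_natCast] using hf

lemma aux_lp_norm_sq (y : ell2 G) : ‖y‖ ^ 2 = ∑' g : G, ‖(y : ∀ _ : G, ℂ) g‖ ^ 2 := by
  have h := lp.norm_rpow_eq_tsum (p := (2 : ℝ≥0∞)) (by norm_num) y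
  have h2 : (2 : ℝ≥0∞).toReal = (2 : ℝ) := by norm_num
  rw [h2] at h
  have hl : ‖y‖ ^ (2 : ℝ) = ‖y‖ ^ (2 : ℕ) := by
    rw [← Real.rpow_natCast]; norm_num
  rw [hl] at h
  rw [h]
  refine tsum_congr fun g => ?_
  rw [← Real.rpow_natCast]; norm_num

lemma aux_prod_summable (x : ell2N G N) :
    Summable fun p : Fin N × G => ‖(x p.1 : ∀ _ : G, ℂ) p.2‖ ^ 2 := by
  refine (summable_prod_of_nonneg fun p => sq_nonneg _).2 ⟨fun n => aux_slice_summable x n, ?_⟩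
  exact Summable.of_finite

lemma aux_norm_sq_eq (x : ell2N G N) :
    ‖x‖ ^ 2 = ∑' p : Fin N × G, ‖(x p.1 : ∀ _ : G, ℂ) p.2‖ ^ 2 := by
  rw [Summable.tsum_prod' (aux_prod_summable x) (fun n => aux_slice_summable x n), tsum_fintype]
  rw [PiLp.norm_sq_eq_of_L2]
  exact Finset.sum_congr rfl fun n _ => aux_lp_norm_sq (x n)

lemma aux_slice_of_prod {f : Fin N × G → ℝ} (hf : Summable f) (n : Fin N) :
    Summable fun g : G => f (n, g) := by
  have hinj : Function.Injective (fun g : G => ((n, g) : Fin N × G)) :=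
    fun g g' h => by simpa using congrArg Prod.snd h
  simpa [Function.comp_def] using hf.comp_injective hinj

/-- build an element of `ell2N` from a square-summable coefficient family. -/
def auxMk (c : Fin N × G → ℂ) (hc : Summable fun p => ‖c p‖ ^ 2) : ell2N G N :=
  WithLp.toLp 2 (fun n => ⟨fun g => c (n, g), aux_memℓp_of_sq (aux_slice_of_prod hc n)⟩)

@[simp] lemma auxMk_apply (c : Fin N × G → ℂ) (hc) (n : Fin N) (g : G) :
    (auxMk c hc n : ∀ _ : G, ℂ) g = c (n, g) := rfl

lemma auxMk_norm_sq (c : Fin N × G → ℂ) (hc : Summable fun p => ‖c p‖ ^ 2) :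
    ‖auxMk c hc‖ ^ 2 = ∑' p : Fin N × G, ‖c p‖ ^ 2 := by
  rw [aux_norm_sq_eq]
  exact tsum_congr fun p => by rw [auxMk_apply]

lemma aux_coord_norm_le (x : ell2N G N) (p : Fin N × G) :
    ‖(x p.1 : ∀ _ : G, ℂ) p.2‖ ≤ ‖x‖ := by
  have h1 : ‖(x p.1 : ∀ _ : G, ℂ) p.2‖ ≤ ‖x p.1‖ :=
    lp.norm_apply_le_norm (by norm_num) (x p.1) p.2
  refine h1.trans ?_
  have h2 : ‖x p.1‖ ^ 2 ≤ ‖x‖ ^ 2 := by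
    rw [PiLp.norm_sq_eq_of_L2]
    exact Finset.single_le_sum (f := fun n => ‖x n‖ ^ 2) (fun n _ => sq_nonneg _)
      (Finset.mem_univ p.1)
  nlinarith [norm_nonneg (x p.1), norm_nonneg x]

/-- coordinate evaluation as a continuous linear functional. -/
def auxEval (p : Fin N × G) : ell2N G N →L[ℂ] ℂ :=
  LinearMap.mkContinuous
    { toFun := fun x => (x p.1 : ∀ _ : G, ℂ) p.2
      map_add' := fun x y => rfl
      map_smul' := fun c x => rfl }
    1 (fun x => by rw [one_mul]; exact aux_coord_norm_le x p)

@[simp] lemma auxEval_apply (p : Fin N × G) (x : ell2N G N) :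
    auxEval p x = (x p.1 : ∀ _ : G, ℂ) p.2 := rfl

lemma aux_tsum_coord_mul_le (x : ell2N G N) {a : Fin N × G → ℂ}
    (ha : Summable fun p => ‖a p‖ ^ 2) :
    ‖∑' p : Fin N × G, (x p.1 : ∀ _ : G, ℂ) p.2 * a p‖ ≤
      Real.sqrt (∑' p : Fin N × G, ‖a p‖ ^ 2) * ‖x‖ := by
  have h := aux_norm_tsum_mul_le (aux_prod_summable x) ha
  have hx : Real.sqrt (∑' p : Fin N × G, ‖(x p.1 : ∀ _ : G, ℂ) p.2‖ ^ 2) = ‖x‖ := by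
    rw [← aux_norm_sq_eq, Real.sqrt_sq (norm_nonneg _)]
  rw [hx] at h
  linarith [h]

end Ell2N


lemma aux_forward {Gt S : Type*} [TopologicalSpace Gt] {N : ℕ}
    (rep : S → Fin N → Gt → ℂ)
    (H : ∀ x : ell2N S N, ∃ f : Gt → ℂ, Continuous f ∧ (∃ C : ℝ, ∀ t, ‖f t‖ ≤ C) ∧
        ∀ t : Gt, HasSum (fun p : Fin N × S => (x p.1 : ∀ _ : S, ℂ) p.2 * rep p.2 p.1 t) (f t)) :
    (∀ (g : S) (n : Fin N), Continuous (rep g n)) ∧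
      ∀ n : Fin N, (⨆ t : Gt, ∑' g : S, ((‖rep g n t‖₊ : ℝ≥0∞) ^ 2)) < ⊤ := by
  classical
  have hsummable : ∀ (x : ell2N S N) (t : Gt),
      Summable fun p : Fin N × S => (x p.1 : ∀ _ : S, ℂ) p.2 * rep p.2 p.1 t := by
    intro x t; obtain ⟨f, -, -, hsum⟩ := H x; exact (hsum t).summable
  -- continuity
  have hcont : ∀ (g : S) (n : Fin N), Continuous (rep g n) := by
    intro g n
    set c : Fin N × S → ℂ := fun p => if p = (n, g) then 1 else 0 with hcdef
    have hcs : Summable fun p => ‖c p‖ ^ 2 := by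
      refine summable_of_ne_finset_zero (s := {(n, g)}) fun p hp => ?_
      have : p ≠ (n, g) := by simpa using hp
      simp [c, this]
    obtain ⟨f, hf, -, hsum⟩ := H (auxMk c hcs)
    have heq : ∀ t, rep g n t = f t := by
      intro t
      have h1 : HasSum (fun p : Fin N × S => c p * rep p.2 p.1 t) (rep g n t) := by
        have hfun : (fun p : Fin N × S => c p * rep p.2 p.1 t)
            = fun p => if p = (n, g) then rep g n t else 0 := by
          funext p; by_cases hp : p = (n, g) <;> simp [c, hp]
        rw [hfun]
        exact hasSum_ite_eq ((n, g) : Fin N × S) (rep g n t)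
      have h2 : HasSum (fun p : Fin N × S => c p * rep p.2 p.1 t) (f t) := by
        have := hsum t
        simpa [auxMk_apply] using this
      exact h1.unique h2
    have : rep g n = f := funext heq
    rw [this]; exact hf
  -- square-summability with uniform bound
  have hA : ∃ C : ℝ, 0 ≤ C ∧ ∀ t : Gt,
      Summable (fun p : Fin N × S => ‖rep p.2 p.1 t‖ ^ 2) ∧
      ∑' p : Fin N × S, ‖rep p.2 p.1 t‖ ^ 2 ≤ C := by
    -- Step 1: summability for each t, by Banach–Steinhaus over finite partial sums
    have ha2 : ∀ t : Gt, Summable fun p : Fin N × S => ‖rep p.2 p.1 t‖ ^ 2 := by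
      intro t
      set Sop : Finset (Fin N × S) → (ell2N S N →L[ℂ] ℂ) :=
        fun F => ∑ p ∈ F, rep p.2 p.1 t • auxEval p with hSdef
      have hSapp : ∀ F (x : ell2N S N),
          Sop F x = ∑ p ∈ F, rep p.2 p.1 t * (x p.1 : ∀ _ : S, ℂ) p.2 := by
        intro F x
        simp [Sop, ContinuousLinearMap.sum_apply, smul_eq_mul]
      have hptwise : ∀ x : ell2N S N, ∃ C, ∀ F, ‖Sop F x‖ ≤ C := by
        intro x
        have hs := hsummable x t
        have habs : Summable fun p : Fin N × S => ‖(x p.1 : ∀ _ : S, ℂ) p.2 * rep p.2 p.1 t‖ :=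
          summable_norm_iff.mpr hs
        refine ⟨∑' p : Fin N × S, ‖(x p.1 : ∀ _ : S, ℂ) p.2 * rep p.2 p.1 t‖, fun F => ?_⟩
        rw [hSapp]
        calc ‖∑ p ∈ F, rep p.2 p.1 t * (x p.1 : ∀ _ : S, ℂ) p.2‖
            ≤ ∑ p ∈ F, ‖rep p.2 p.1 t * (x p.1 : ∀ _ : S, ℂ) p.2‖ := norm_sum_le _ _
          _ = ∑ p ∈ F, ‖(x p.1 : ∀ _ : S, ℂ) p.2 * rep p.2 p.1 t‖ := by
              refine Finset.sum_congr rfl fun p _ => ?_; rw [mul_comm]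
          _ ≤ _ := Summable.sum_le_tsum F (fun _ _ => norm_nonneg _) habs
      obtain ⟨C, hC⟩ := banach_steinhaus hptwise
      refine summable_of_sum_le (fun p => sq_nonneg _) (c := (max C 0) ^ 2) fun F => ?_
      set s := ∑ p ∈ F, ‖rep p.2 p.1 t‖ ^ 2 with hsdef
      have hs0 : 0 ≤ s := Finset.sum_nonneg fun _ _ => sq_nonneg _
      set c : Fin N × S → ℂ := fun p => if p ∈ F then conj (rep p.2 p.1 t) else 0 with hcdef
      have hcs : Summable fun p => ‖c p‖ ^ 2 :=
        summable_of_ne_finset_zero (s := F) (fun p hp => by simp [c, hp])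
      have hy : ‖auxMk c hcs‖ ^ 2 = s := by
        rw [auxMk_norm_sq, tsum_eq_sum (s := F) (fun p hp => by simp [c, hp])]
        refine Finset.sum_congr rfl fun p hp => by simp [c, hp]
      have hSy : Sop F (auxMk c hcs) = (s : ℂ) := by
        rw [hSapp]
        have : ∀ p ∈ F, rep p.2 p.1 t * (auxMk c hcs p.1 : ∀ _ : S, ℂ) p.2
            = ((‖rep p.2 p.1 t‖ ^ 2 : ℝ) : ℂ) := by
          intro p hp
          rw [auxMk_apply]
          simp only [c, Prod.mk.eta, if_pos hp]
          rw [Complex.mul_conj]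
          norm_cast
          rw [Complex.normSq_eq_norm_sq]
        rw [Finset.sum_congr rfl this, hsdef]
        push_cast
        rfl
      have h1 : s ≤ ‖Sop F‖ * ‖auxMk c hcs‖ := by
        have := (Sop F).le_opNorm (auxMk c hcs)
        rw [hSy] at this
        simpa [Complex.norm_real, abs_of_nonneg hs0] using this
      have hnorm : ‖auxMk c hcs‖ = Real.sqrt s := by
        rw [← hy, Real.sqrt_sq (norm_nonneg _)]
      have h2 : s ≤ (max C 0) * Real.sqrt s := by
        rw [hnorm] at h1
        refine h1.trans ?_
        gcongr
        exact (hC F).trans (le_max_left _ _)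
      exact aux_le_sq_of_le_mul_sqrt hs0 (le_max_right _ _) h2
    -- Step 2: uniform bound via Banach–Steinhaus over t
    set T : Gt → (ell2N S N →L[ℂ] ℂ) := fun t =>
      LinearMap.mkContinuous
        { toFun := fun x => ∑' p : Fin N × S, (x p.1 : ∀ _ : S, ℂ) p.2 * rep p.2 p.1 t
          map_add' := fun x y => by
            rw [← Summable.tsum_add (hsummable x t) (hsummable y t)]
            refine tsum_congr fun p => ?_
            have : ((x + y) p.1 : ∀ _ : S, ℂ) p.2
                = (x p.1 : ∀ _ : S, ℂ) p.2 + (y p.1 : ∀ _ : S, ℂ) p.2 := rfl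
            rw [this, add_mul]
          map_smul' := fun d x => by
            simp only [RingHom.id_apply, smul_eq_mul]
            rw [← tsum_mul_left]
            refine tsum_congr fun p => ?_
            have : ((d • x) p.1 : ∀ _ : S, ℂ) p.2 = d * (x p.1 : ∀ _ : S, ℂ) p.2 := rfl
            rw [this, mul_assoc] }
        (Real.sqrt (∑' p : Fin N × S, ‖rep p.2 p.1 t‖ ^ 2))
        (fun x => aux_tsum_coord_mul_le x (ha2 t)) with hTdef
    have hTapp : ∀ t (x : ell2N S N),
        T t x = ∑' p : Fin N × S, (x p.1 : ∀ _ : S, ℂ) p.2 * rep p.2 p.1 t := fun _ _ => rfl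
    have hpt : ∀ x : ell2N S N, ∃ C, ∀ t : Gt, ‖T t x‖ ≤ C := by
      intro x
      obtain ⟨f, -, ⟨C, hC⟩, hsum⟩ := H x
      refine ⟨C, fun t => ?_⟩
      rw [hTapp, (hsum t).tsum_eq]
      exact hC t
    obtain ⟨C, hC⟩ := banach_steinhaus hpt
    refine ⟨(max C 0) ^ 2, sq_nonneg _, fun t => ⟨ha2 t, ?_⟩⟩
    set c : Fin N × S → ℂ := fun p => conj (rep p.2 p.1 t) with hcdef
    have hcs : Summable fun p => ‖c p‖ ^ 2 := by simpa [c] using ha2 t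
    set s := ∑' p : Fin N × S, ‖rep p.2 p.1 t‖ ^ 2 with hsdef
    have hs0 : 0 ≤ s := tsum_nonneg fun _ => sq_nonneg _
    have hy : ‖auxMk c hcs‖ ^ 2 = s := by
      rw [auxMk_norm_sq]
      refine tsum_congr fun p => by simp [c]
    have hTy : T t (auxMk c hcs) = (s : ℂ) := by
      rw [hTapp]
      have h1 : ∀ p : Fin N × S, (auxMk c hcs p.1 : ∀ _ : S, ℂ) p.2 * rep p.2 p.1 t
          = ((‖rep p.2 p.1 t‖ ^ 2 : ℝ) : ℂ) := by
        intro p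
        rw [auxMk_apply]
        simp only [c, Prod.mk.eta]
        rw [mul_comm, Complex.mul_conj]
        norm_cast
        rw [Complex.normSq_eq_norm_sq]
      rw [tsum_congr h1, hsdef]
      exact (Complex.ofRealCLM.map_tsum (ha2 t)).symm
    have h1 : s ≤ ‖T t‖ * ‖auxMk c hcs‖ := by
      have := (T t).le_opNorm (auxMk c hcs)
      rw [hTy] at this
      simpa [Complex.norm_real, abs_of_nonneg hs0] using this
    have hnorm : ‖auxMk c hcs‖ = Real.sqrt s := by
      rw [← hy, Real.sqrt_sq (norm_nonneg _)]
    have h2 : s ≤ (max C 0) * Real.sqrt s := by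
      rw [hnorm] at h1
      refine h1.trans ?_
      gcongr
      exact (hC t).trans (le_max_left _ _)
    exact aux_le_sq_of_le_mul_sqrt hs0 (le_max_right _ _) h2
  obtain ⟨C, hC0, hA⟩ := hA
  refine ⟨hcont, fun n => ?_⟩
  have hbound : (⨆ t : Gt, ∑' g : S, ((‖rep g n t‖₊ : ℝ≥0∞) ^ 2)) ≤ ENNReal.ofReal C := by
    refine iSup_le fun t => ?_
    obtain ⟨hsum, hle⟩ := hA t
    have hsl : Summable fun g : S => ‖rep g n t‖ ^ 2 := aux_slice_of_prod hsum n
    have hslle : ∑' g : S, ‖rep g n t‖ ^ 2 ≤ C := by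
      refine le_trans ?_ hle
      refine Summable.tsum_le_tsum_of_inj (fun g : S => ((n, g) : Fin N × S))
        (fun g g' h => by simpa using congrArg Prod.snd h)
        (fun p _ => sq_nonneg _) (fun g => le_refl _) hsl hsum
    calc ∑' g : S, ((‖rep g n t‖₊ : ℝ≥0∞) ^ 2)
        = ENNReal.ofReal (∑' g : S, ‖rep g n t‖ ^ 2) := aux_enn_tsum_eq_ofReal hsl
      _ ≤ ENNReal.ofReal C := ENNReal.ofReal_le_ofReal hslle
  exact lt_of_le_of_lt hbound ENNReal.ofReal_lt_top


lemma aux_backward {Gt S : Type*} [TopologicalSpace Gt] {N : ℕ}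
    (rep : S → Fin N → Gt → ℂ)
    (hcont : ∀ (g : S) (n : Fin N), Continuous (rep g n))
    (hb : ∀ n : Fin N, (⨆ t : Gt, ∑' g : S, ((‖rep g n t‖₊ : ℝ≥0∞) ^ 2)) < ⊤)
    (x : ell2N S N) :
    ∃ f : Gt → ℂ, Continuous f ∧ (∃ C : ℝ, ∀ t, ‖f t‖ ≤ C) ∧
      ∀ t : Gt, HasSum (fun p : Fin N × S => (x p.1 : ∀ _ : S, ℂ) p.2 * rep p.2 p.1 t) (f t) := by
  classical
  -- uniform bound
  have hA : ∃ D : ℝ, 0 ≤ D ∧ ∀ t : Gt,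
      Summable (fun p : Fin N × S => ‖rep p.2 p.1 t‖ ^ 2) ∧
      ∑' p : Fin N × S, ‖rep p.2 p.1 t‖ ^ 2 ≤ D := by
    set Sn : Fin N → ℝ≥0∞ := fun n => ⨆ t : Gt, ∑' g : S, ((‖rep g n t‖₊ : ℝ≥0∞) ^ 2) with hSn
    have hslice : ∀ (n : Fin N) (t : Gt),
        Summable (fun g : S => ‖rep g n t‖ ^ 2) ∧
        ∑' g : S, ‖rep g n t‖ ^ 2 ≤ (Sn n).toReal := by
      intro n t
      have h1 : ∑' g : S, ((‖rep g n t‖₊ : ℝ≥0∞) ^ 2) ≤ Sn n :=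
        le_iSup (fun t => ∑' g : S, ((‖rep g n t‖₊ : ℝ≥0∞) ^ 2)) t
      have hne : ∑' g : S, ((‖rep g n t‖₊ : ℝ≥0∞) ^ 2) ≠ ⊤ := (h1.trans_lt (hb n)).ne
      have h2 : Summable fun g : S => (‖rep g n t‖₊ ^ 2 : ℝ≥0) := by
        rw [← ENNReal.tsum_coe_ne_top_iff_summable]
        simpa [ENNReal.coe_pow] using hne
      have h3 : Summable fun g : S => ‖rep g n t‖ ^ 2 := by
        have := NNReal.summable_coe.mpr h2
        simpa using this
      refine ⟨h3, ?_⟩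
      have h4 : ∑' g : S, ((‖rep g n t‖₊ : ℝ≥0∞) ^ 2)
          = ENNReal.ofReal (∑' g : S, ‖rep g n t‖ ^ 2) := aux_enn_tsum_eq_ofReal h3
      have h5 : ENNReal.ofReal (∑' g : S, ‖rep g n t‖ ^ 2) ≤ Sn n := h4 ▸ h1
      have h6 := ENNReal.toReal_mono (hb n).ne h5
      rwa [ENNReal.toReal_ofReal (tsum_nonneg fun _ => sq_nonneg _)] at h6
    refine ⟨∑ n : Fin N, (Sn n).toReal, Finset.sum_nonneg fun n _ => ENNReal.toReal_nonneg,
      fun t => ?_⟩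
    have hps : Summable fun p : Fin N × S => ‖rep p.2 p.1 t‖ ^ 2 := by
      refine (summable_prod_of_nonneg fun p => sq_nonneg _).2 ⟨fun n => (hslice n t).1, ?_⟩
      exact Summable.of_finite
    refine ⟨hps, ?_⟩
    rw [Summable.tsum_prod' hps (fun n => (hslice n t).1), tsum_fintype]
    exact Finset.sum_le_sum fun n _ => (hslice n t).2
  obtain ⟨D, hD0, hA⟩ := hA
  have hXsq := aux_prod_summable x
  have habs : ∀ t : Gt,
      Summable fun p : Fin N × S => ‖(x p.1 : ∀ _ : S, ℂ) p.2 * rep p.2 p.1 t‖ := by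
    intro t
    simpa [norm_mul] using aux_summable_mul_of_sq (fun p => norm_nonneg _)
      (fun p => norm_nonneg _) hXsq (hA t).1
  have hsum : ∀ t : Gt,
      Summable fun p : Fin N × S => (x p.1 : ∀ _ : S, ℂ) p.2 * rep p.2 p.1 t :=
    fun t => (habs t).of_norm
  set f : Gt → ℂ := fun t => ∑' p : Fin N × S, (x p.1 : ∀ _ : S, ℂ) p.2 * rep p.2 p.1 t with hfdef
  have hXnorm : Real.sqrt (∑' p : Fin N × S, ‖(x p.1 : ∀ _ : S, ℂ) p.2‖ ^ 2) = ‖x‖ := by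
    rw [← aux_norm_sq_eq, Real.sqrt_sq (norm_nonneg _)]
  refine ⟨f, ?_, ⟨‖x‖ * Real.sqrt D, fun t => ?_⟩, fun t => (hsum t).hasSum⟩
  · -- continuity via uniform convergence
    have hP : ∀ F : Finset (Fin N × S),
        Continuous fun t : Gt => ∑ p ∈ F, (x p.1 : ∀ _ : S, ℂ) p.2 * rep p.2 p.1 t :=
      fun F => continuous_finset_sum F fun p _ => continuous_const.mul (hcont p.2 p.1)
    have hTU : TendstoUniformly
        (fun (F : Finset (Fin N × S)) (t : Gt) =>
          ∑ p ∈ F, (x p.1 : ∀ _ : S, ℂ) p.2 * rep p.2 p.1 t) f Filter.atTop := by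
      rw [Metric.tendstoUniformly_iff]
      intro ε hε
      set δ := ε / (Real.sqrt D + 1) with hδdef
      have hδ : 0 < δ := div_pos hε (by positivity)
      have htail := tendsto_tsum_compl_atTop_zero
        (fun p : Fin N × S => ‖(x p.1 : ∀ _ : S, ℂ) p.2‖ ^ 2)
      have hev : ∀ᶠ F : Finset (Fin N × S) in Filter.atTop,
          ∑' p : {q : Fin N × S // q ∉ F}, ‖(x p.1.1 : ∀ _ : S, ℂ) p.1.2‖ ^ 2 < δ ^ 2 :=
        htail.eventually_lt_const (by positivity)
      filter_upwards [hev] with F hF t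
      rw [dist_eq_norm]
      have hdecomp : f t - ∑ p ∈ F, (x p.1 : ∀ _ : S, ℂ) p.2 * rep p.2 p.1 t
          = ∑' p : {q : Fin N × S // q ∉ F},
              (x p.1.1 : ∀ _ : S, ℂ) p.1.2 * rep p.1.2 p.1.1 t := by
        have h := Summable.sum_add_tsum_compl (s := F) (hsum t)
        rw [hfdef]
        simp only []
        rw [← h]
        ring_nf
        rfl
      rw [hdecomp]
      have hXs : Summable fun p : {q : Fin N × S // q ∉ F} =>
          ‖(x p.1.1 : ∀ _ : S, ℂ) p.1.2‖ ^ 2 := hXsq.subtype _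
      have has : Summable fun p : {q : Fin N × S // q ∉ F} => ‖rep p.1.2 p.1.1 t‖ ^ 2 :=
        (hA t).1.subtype _
      have hle := aux_norm_tsum_mul_le (b := fun p : {q : Fin N × S // q ∉ F} =>
        (x p.1.1 : ∀ _ : S, ℂ) p.1.2) (c := fun p => rep p.1.2 p.1.1 t) hXs has
      refine lt_of_le_of_lt hle ?_
      have htail_le : Real.sqrt (∑' p : {q : Fin N × S // q ∉ F},
          ‖(x p.1.1 : ∀ _ : S, ℂ) p.1.2‖ ^ 2) < δ :=
        (Real.sqrt_lt' hδ).2 hF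
      have hsub : ∑' p : {q : Fin N × S // q ∉ F}, ‖rep p.1.2 p.1.1 t‖ ^ 2 ≤ D := by
        refine le_trans ?_ (hA t).2
        refine Summable.tsum_le_tsum_of_inj (fun p : {q : Fin N × S // q ∉ F} => p.1)
          Subtype.val_injective (fun p _ => sq_nonneg _) (fun p => le_refl _) has (hA t).1
      have hs2 : Real.sqrt (∑' p : {q : Fin N × S // q ∉ F}, ‖rep p.1.2 p.1.1 t‖ ^ 2)
          ≤ Real.sqrt D := Real.sqrt_le_sqrt hsub
      calc Real.sqrt (∑' p : {q : Fin N × S // q ∉ F}, ‖(x p.1.1 : ∀ _ : S, ℂ) p.1.2‖ ^ 2) *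
            Real.sqrt (∑' p : {q : Fin N × S // q ∉ F}, ‖rep p.1.2 p.1.1 t‖ ^ 2)
          ≤ Real.sqrt (∑' p : {q : Fin N × S // q ∉ F}, ‖(x p.1.1 : ∀ _ : S, ℂ) p.1.2‖ ^ 2) *
            (Real.sqrt D + 1) := by
            gcongr
            linarith [Real.sqrt_nonneg (∑' p : {q : Fin N × S // q ∉ F}, ‖rep p.1.2 p.1.1 t‖ ^ 2), hs2]
        _ < δ * (Real.sqrt D + 1) := by
            have h01 : (0:ℝ) < Real.sqrt D + 1 := by positivity
            exact mul_lt_mul_of_pos_right htail_le h01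
        _ = ε := by
            rw [hδdef]
            field_simp
    exact hTU.continuous (Filter.Eventually.of_forall hP).frequently
  · -- boundedness
    have h := aux_norm_tsum_mul_le (b := fun p : Fin N × S => (x p.1 : ∀ _ : S, ℂ) p.2)
      (c := fun p => rep p.2 p.1 t) hXsq (hA t).1
    rw [hXnorm] at h
    refine h.trans ?_
    gcongr
    exact (hA t).2


end

/-- For a countable discrete subgroup `G` of an LCA group `G̃`, a unitary
representation `U` of `G̃` on `L²(G̃)` and `φ_1, …, φ_N ∈ L²(G̃)` with pointwise defined
representatives `rep g n` of `U(g)φ_n`: every `ℓ²_N(G)` coefficient family produces a pointwise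
unconditionally convergent series whose sum is a continuous bounded function iff each `U(g)φ_n`
is continuous and `sup_t Σ_g |[U(g)φ_n](t)|² < ∞` for each `n`. -/
theorem statement19
    {Gt : Type*} [AddCommGroup Gt] [TopologicalSpace Gt] [IsTopologicalAddGroup Gt]
    [LocallyCompactSpace Gt] [MeasurableSpace Gt] [BorelSpace Gt]
    (ν : Measure Gt) [ν.IsAddHaarMeasure]
    (Gs : AddSubgroup Gt) [Countable Gs] [DiscreteTopology Gs]
    (U : Multiplicative Gt →* (Lp ℂ 2 ν ≃ₗᵢ[ℂ] Lp ℂ 2 ν))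
    {N : ℕ} (φ : Fin N → Lp ℂ 2 ν)
    (rep : Gs → Fin N → Gt → ℂ)
    (hrep : ∀ (g : Gs) (n : Fin N),
      rep g n =ᵐ[ν] ⇑(U (Multiplicative.ofAdd (g : Gt)) (φ n))) :
    (∀ x : ell2N Gs N, ∃ f : Gt → ℂ, Continuous f ∧ (∃ C : ℝ, ∀ t, ‖f t‖ ≤ C) ∧
        ∀ t : Gt, HasSum (fun p : Fin N × Gs => (x p.1 : ∀ _ : Gs, ℂ) p.2 * rep p.2 p.1 t) (f t))
      ↔ ((∀ (g : Gs) (n : Fin N), Continuous (rep g n)) ∧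
          ∀ n : Fin N, (⨆ t : Gt, ∑' g : Gs, ((‖rep g n t‖₊ : ℝ≥0∞) ^ 2)) < ⊤) := by
  constructor
  · intro H
    exact aux_forward rep H
  · rintro ⟨hc, hb⟩ x
    exact aux_backward rep hc hb x

end GroupSampling
end
end
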